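/- Fix s ≥ 1 and L > 2s+1. Define f : {0,1}^L → Π_{j=1}^{2s+1} [0, (2s+1)L^j − 1] by f(x)_j = (x · a^{(j)}) mod (2s+1)L^j, where a^{(j)}_i = Σ_{ℓ=1}^i ℓ^{j−1}. Then for any x, x' ∈ {0,1}^L, if B_{1,s}(x) ∩ B_{1,s}(x') ≠ ∅ and f(x) = f(x'), then x = x'. -/

import Mathlib

/-- `B_{1,s}(x)`: all strings of length `L - 1` obtained from `x` by one deletion
and at most `s` substitutions. -/
def ball (s : ℕ) {L : ℕ} (x : Fin L → Bool) : Set (Fin (L - 1) → Bool) :=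
  {y | ∃ f : Fin (L - 1) → Fin L, StrictMono f ∧ hammingDist y (x ∘ f) ≤ s}

/-- `a^{(j)}_i = Σ_{ℓ=1}^i ℓ^{j-1}` (natural-number version). -/
def avec (j i : ℕ) : ℕ := ∑ ℓ ∈ Finset.Icc 1 i, ℓ ^ (j - 1)

/-- The inner product `x · a^{(j)}` for a string `x` of length `L`,
where position `i : Fin L` is the 1-based position `i + 1`. -/
def dotA {L : ℕ} (j : ℕ) (x : Fin L → Bool) : ℕ :=
  ∑ i : Fin L, (if x i then 1 else 0) * avec j (i.val + 1)

open Finset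


def bi (b : Bool) : ℤ := if b then 1 else 0

lemma bi_nonneg (b : Bool) : 0 ≤ bi b := by cases b <;> simp [bi]
lemma bi_le_one (b : Bool) : bi b ≤ 1 := by cases b <;> simp [bi]
lemma bi_cases (b : Bool) : bi b = 0 ∨ bi b = 1 := by cases b <;> simp [bi]
lemma bi_inj {a b : Bool} (h : bi a = bi b) : a = b := by
  cases a <;> cases b <;> simp [bi] at h ⊢

lemma sum_shift (H : ℕ → ℤ) (L d : ℕ) (hd : d < L) :
    ∑ k ∈ range L, H k
      = (∑ k ∈ range (L-1), H (if k < d then k else k+1)) + H d := by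
  induction L, (show d+1 ≤ L from hd) using Nat.le_induction with
  | base =>
      simp only [Nat.add_sub_cancel, Finset.sum_range_succ]
      congr 1
      refine Finset.sum_congr rfl (fun k hk => ?_)
      rw [if_pos (mem_range.mp hk)]
  | succ L hL ih =>
      rw [Finset.sum_range_succ, ih (by omega)]
      have h1 : L + 1 - 1 = (L-1) + 1 := by omega
      rw [h1, Finset.sum_range_succ]
      rw [if_neg (show ¬(L-1 < d) by omega)]
      have h2 : L - 1 + 1 = L := by omega
      rw [h2]
      ring

lemma smono_shift (V : ℕ → ℕ) (h : StrictMono V) : ∀ k m, V k + m ≤ V (k + m) := by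
  intro k m
  induction m with
  | zero => simp
  | succ m ih =>
      have h1 := h (Nat.lt_succ_self (k + m))
      simp only [Nat.succ_eq_add_one] at h1
      have h2 : V (k + (m+1)) = V (k + m + 1) := by rw [← Nat.add_assoc]
      omega

lemma exists_del (L : ℕ) (hL : 2 ≤ L) (f : Fin (L-1) → Fin L) (hf : StrictMono f) :
    ∃ d, d < L ∧ ∀ i : Fin (L-1), ((f i : ℕ)) = if (i:ℕ) < d then (i:ℕ) else (i:ℕ)+1 := by
  classical
  set V : ℕ → ℕ := fun k => if h : k < L-1 then ((f ⟨k, h⟩ : Fin L) : ℕ) else k+1 with hV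
  have hVmono : StrictMono V := by
    apply strictMono_nat_of_lt_succ
    intro k
    by_cases h1 : k + 1 < L - 1
    · have h0 : k < L - 1 := by omega
      simp only [hV, dif_pos h0, dif_pos h1]
      exact hf (by simp [Fin.lt_def])
    · by_cases h0 : k < L - 1
      · simp only [hV, dif_pos h0, dif_neg h1]
        have := (f ⟨k, h0⟩).isLt
        omega
      · simp only [hV, dif_neg h0, dif_neg h1]
        omega
  have hVval : ∀ i : Fin (L-1), V (i : ℕ) = ((f i : Fin L) : ℕ) := by
    intro i
    simp only [hV, dif_pos i.isLt]
  have hlow : ∀ k, k ≤ V k := fun k => by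
    have := smono_shift V hVmono 0 k
    simp at this; omega
  have hup : ∀ k, k < L - 1 → V k ≤ k + 1 := by
    intro k hk
    have h2 : L - 2 < L - 1 := by omega
    have := smono_shift V hVmono k (L - 2 - k)
    have hkk : k + (L - 2 - k) = L - 2 := by omega
    rw [hkk] at this
    have hvL : V (L-2) ≤ L - 1 := by
      simp only [hV, dif_pos h2]
      have := (f ⟨L-2, h2⟩).isLt
      omega
    omega
  by_cases hex : ∃ k, k < L - 1 ∧ V k = k + 1
  · obtain ⟨hd1, hd2⟩ := Nat.find_spec hex
    refine ⟨Nat.find hex, by omega, fun i => ?_⟩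
    rw [← hVval]
    by_cases hi : (i : ℕ) < Nat.find hex
    · rw [if_pos hi]
      have hmin := Nat.find_min hex hi
      have := hlow (i : ℕ)
      have := hup (i : ℕ) i.isLt
      have : V (i:ℕ) ≠ (i:ℕ) + 1 := fun hc => hmin ⟨i.isLt, hc⟩
      omega
    · rw [if_neg hi]
      push_neg at hi
      have h1 := smono_shift V hVmono (Nat.find hex) ((i:ℕ) - Nat.find hex)
      have h2 : Nat.find hex + ((i:ℕ) - Nat.find hex) = (i:ℕ) := by omega
      rw [h2, hd2] at h1
      have := hup (i : ℕ) i.isLt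
      omega
  · push_neg at hex
    refine ⟨L - 1, by omega, fun i => ?_⟩
    rw [if_pos i.isLt, ← hVval]
    have := hex (i:ℕ) i.isLt
    have := hlow (i:ℕ)
    have := hup (i:ℕ) i.isLt
    omega

lemma swap_sum (n L : ℕ) (hn : n ≤ L) (W : Fin n → ℤ) (e : ℕ → ℤ) :
    ∑ i : Fin n, W i * (∑ ℓ ∈ Icc 1 ((i:ℕ)+1), e ℓ)
      = ∑ ℓ ∈ Icc 1 L, e ℓ * (∑ i : Fin n, if ℓ ≤ (i:ℕ)+1 then W i else 0) := by
  have h1 : ∀ i : Fin n, W i * (∑ ℓ ∈ Icc 1 ((i:ℕ)+1), e ℓ)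
      = ∑ ℓ ∈ Icc 1 L, (if ℓ ≤ (i:ℕ)+1 then W i * e ℓ else 0) := by
    intro i
    rw [Finset.sum_ite, Finset.sum_const_zero, add_zero]
    have hfil : (Icc 1 L).filter (fun ℓ => ℓ ≤ (i:ℕ)+1) = Icc 1 ((i:ℕ)+1) := by
      ext a
      simp only [mem_filter, mem_Icc]
      have := i.isLt
      omega
    rw [hfil, Finset.mul_sum]
  calc ∑ i : Fin n, W i * (∑ ℓ ∈ Icc 1 ((i:ℕ)+1), e ℓ)
      = ∑ i : Fin n, ∑ ℓ ∈ Icc 1 L, (if ℓ ≤ (i:ℕ)+1 then W i * e ℓ else 0) := by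
        exact Finset.sum_congr rfl (fun i _ => h1 i)
    _ = ∑ ℓ ∈ Icc 1 L, ∑ i : Fin n, (if ℓ ≤ (i:ℕ)+1 then W i * e ℓ else 0) := Finset.sum_comm
    _ = ∑ ℓ ∈ Icc 1 L, e ℓ * (∑ i : Fin n, if ℓ ≤ (i:ℕ)+1 then W i else 0) := by
        refine Finset.sum_congr rfl (fun ℓ _ => ?_)
        rw [Finset.mul_sum]
        refine Finset.sum_congr rfl (fun i _ => ?_)
        split_ifs <;> ring

lemma point_sum (n : ℕ) (q : Fin n → ℤ) (t : ℕ) (ht : t < n) :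
    (∑ i : Fin n, if (i:ℕ) = t then q i else 0) = q ⟨t, ht⟩ := by
  rw [Finset.sum_eq_single_of_mem ⟨t, ht⟩ (Finset.mem_univ _)]
  · simp
  · intro i _ hne
    rw [if_neg]
    intro hc
    exact hne (Fin.ext hc)

lemma del_expand (L d : ℕ) (hdL : d < L) (XZ : ℕ → ℤ) (fv : ℕ → ℕ)
    (hfv : ∀ k, k < L-1 → fv k = if k < d then k else k+1)
    (ℓ : ℕ) (hℓ1 : 1 ≤ ℓ) (hℓL : ℓ ≤ L) :
    ∑ k ∈ range L, (if ℓ ≤ k+1 then XZ k else 0)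
      = (∑ k ∈ range (L-1), (if ℓ ≤ k+1 then XZ (fv k) else 0))
        + ((if ℓ ≤ d+1 then XZ d else XZ (ℓ-1))) := by
  have hmain : ∑ k ∈ range L, (if ℓ ≤ k+1 then XZ k else 0)
      = (∑ k ∈ range (L-1), (if ℓ ≤ (if k < d then k else k+1)+1
          then XZ (if k < d then k else k+1) else 0))
        + (if ℓ ≤ d+1 then XZ d else 0) :=
    sum_shift (fun k => if ℓ ≤ k+1 then XZ k else 0) L d hdL
  rw [hmain]
  have hsplit : ∀ k, k < L - 1 →
      (if ℓ ≤ (if k < d then k else k+1) + 1 then XZ (if k < d then k else k+1) else 0)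
      = (if ℓ ≤ k+1 then XZ (fv k) else 0) + (if (ℓ = k+2 ∧ d ≤ k) then XZ (k+1) else 0) := by
    intro k hk
    rw [hfv k hk]
    by_cases hkd : k < d
    · simp only [if_pos hkd]
      rw [if_neg (show ¬(ℓ = k+2 ∧ d ≤ k) by omega)]
      ring
    · simp only [if_neg hkd]
      by_cases h1 : ℓ ≤ k + 1
      · rw [if_pos (show ℓ ≤ (k+1)+1 by omega), if_pos h1,
          if_neg (show ¬(ℓ = k+2 ∧ d ≤ k) by omega)]
        ring
      · by_cases h2 : ℓ = k + 2
        · rw [if_pos (show ℓ ≤ (k+1)+1 by omega), if_neg h1,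
            if_pos (show (ℓ = k+2 ∧ d ≤ k) by omega)]
          ring
        · rw [if_neg (show ¬(ℓ ≤ (k+1)+1) by omega), if_neg h1,
            if_neg (show ¬(ℓ = k+2 ∧ d ≤ k) by omega)]
          ring
  rw [Finset.sum_congr rfl (fun k hk => hsplit k (mem_range.mp hk)), Finset.sum_add_distrib]
  have hpoint : (∑ k ∈ range (L-1), if (ℓ = k+2 ∧ d ≤ k) then XZ (k+1) else 0)
      = if d + 2 ≤ ℓ then XZ (ℓ-1) else 0 := by
    by_cases hc : d + 2 ≤ ℓ
    · rw [if_pos hc]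
      have : ∀ k, ((ℓ = k+2 ∧ d ≤ k) ↔ k = ℓ - 2) := by intro k; omega
      calc (∑ k ∈ range (L-1), if (ℓ = k+2 ∧ d ≤ k) then XZ (k+1) else 0)
          = ∑ k ∈ range (L-1), if k = ℓ - 2 then XZ (k+1) else 0 := by
            exact Finset.sum_congr rfl (fun k _ => by simp only [this k])
        _ = if ℓ - 2 ∈ range (L-1) then XZ (ℓ - 2 + 1) else 0 := Finset.sum_ite_eq' _ _ _
        _ = XZ (ℓ-1) := by
            rw [if_pos (mem_range.mpr (by omega))]
            congr 1
            omega
    · rw [if_neg hc]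
      apply Finset.sum_eq_zero
      intro k _
      rw [if_neg (by omega)]
  rw [hpoint]
  have hd2 : (if ℓ ≤ d + 1 then XZ d else 0) + (if d + 2 ≤ ℓ then XZ (ℓ-1) else 0)
      = if ℓ ≤ d+1 then XZ d else XZ (ℓ-1) := by
    by_cases h : ℓ ≤ d + 1
    · rw [if_pos h, if_neg (by omega), if_pos h]; ring
    · rw [if_neg h, if_pos (by omega), if_neg h]; ring
  rw [← hd2]
  ring

lemma prod_sign (F : Finset ℕ) (ℓ : ℕ) :
    (Even ((F.filter (fun m => m < ℓ)).card) → 0 < ∏ m ∈ F, (2*(m:ℤ)+1 - 2*(ℓ:ℤ)))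
    ∧ (¬Even ((F.filter (fun m => m < ℓ)).card) → (∏ m ∈ F, (2*(m:ℤ)+1 - 2*(ℓ:ℤ))) < 0) := by
  classical
  induction F using Finset.induction_on with
  | empty => simp
  | insert a F ha ih =>
      rw [Finset.prod_insert ha, Finset.filter_insert]
      by_cases haℓ : a < ℓ
      · rw [if_pos haℓ]
        have hnm : a ∉ F.filter (fun m => m < ℓ) := fun hc => ha (Finset.mem_of_mem_filter _ hc)
        rw [Finset.card_insert_of_notMem hnm]
        have hfac : 2*(a:ℤ)+1 - 2*(ℓ:ℤ) < 0 := by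
          have : (a:ℤ) < (ℓ:ℤ) := by exact_mod_cast haℓ
          linarith
        constructor
        · intro hev
          rw [Nat.even_add_one] at hev
          exact mul_pos_of_neg_of_neg hfac (ih.2 hev)
        · intro hev
          rw [Nat.even_add_one, not_not] at hev
          exact mul_neg_of_neg_of_pos hfac (ih.1 hev)
      · rw [if_neg haℓ]
        have hfac : 0 < 2*(a:ℤ)+1 - 2*(ℓ:ℤ) := by
          have : (ℓ:ℤ) ≤ (a:ℤ) := by exact_mod_cast Nat.le_of_not_lt haℓ
          linarith
        exact ⟨fun hev => mul_pos hfac (ih.1 hev),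
               fun hev => mul_neg_of_pos_of_neg hfac (ih.2 hev)⟩

lemma descartes (n L : ℕ) (C v : ℕ → ℤ) (M : Finset ℕ)
    (hM : M.card ≤ n)
    (hmom : ∀ t, t ≤ n → ∑ ℓ ∈ Icc 1 L, (ℓ:ℤ)^t * C ℓ = 0)
    (hCv : ∀ ℓ ∈ Icc 1 L, C ℓ = v ℓ ∨ C ℓ = v ℓ + 1)
    (hv : ∀ ℓ, 1 ≤ ℓ → ℓ < L → v ℓ ≠ v (ℓ+1) → ℓ ∈ M) :
    ∀ ℓ ∈ Icc 1 L, C ℓ = 0 := by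
  classical
  set sgn : ℕ → ℤ := fun ℓ => if 0 ≤ v ℓ then 1 else -1 with hsgn
  have hsgn_cases : ∀ a, sgn a = 1 ∨ sgn a = -1 := by
    intro a; simp only [hsgn]; split <;> simp
  set F : Finset ℕ := M.filter (fun m => 1 ≤ m ∧ m < L ∧ sgn m ≠ sgn (m+1)) with hF
  have hF1 : ∀ m ∈ F, 1 ≤ m ∧ m < L := by
    intro m hm
    have := Finset.mem_filter.mp hm
    exact ⟨this.2.1, this.2.2.1⟩
  have hFflip : ∀ m ∈ F, sgn m ≠ sgn (m+1) := by
    intro m hm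
    exact (Finset.mem_filter.mp hm).2.2.2
  have hsgn_step : ∀ ℓ, 1 ≤ ℓ → ℓ < L → ℓ ∉ F → sgn (ℓ+1) = sgn ℓ := by
    intro ℓ h1 h2 hnf
    by_cases hvv : v ℓ = v (ℓ+1)
    · simp only [hsgn, hvv]
    · have hM' := hv ℓ h1 h2 hvv
      by_contra hne
      exact hnf (Finset.mem_filter.mpr ⟨hM', h1, h2, fun hc => hne hc.symm⟩)
  have hpos : ∀ ℓ ∈ Icc 1 L, 0 ≤ sgn ℓ * C ℓ ∧ (C ℓ ≠ 0 → 0 < sgn ℓ * C ℓ) := by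
    intro ℓ hℓ
    have hC := hCv ℓ hℓ
    by_cases hvp : 0 ≤ v ℓ
    · have hsv : sgn ℓ = 1 := by simp only [hsgn]; rw [if_pos hvp]
      rw [hsv, one_mul]
      omega
    · have hsv : sgn ℓ = -1 := by simp only [hsgn]; rw [if_neg hvp]
      rw [hsv, neg_one_mul]
      omega
  -- parity lemma
  have hQ : ∀ ℓ, 1 ≤ ℓ → ℓ ≤ L →
      (Even ((F.filter (fun m => m < ℓ)).card) ↔ sgn ℓ = sgn 1) := by
    intro ℓ h1 h2
    induction ℓ, h1 using Nat.le_induction with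
    | base =>
        have h0 : F.filter (fun m => m < 1) = ∅ := by
          apply Finset.filter_eq_empty_iff.mpr
          intro m hm
          have := (hF1 m hm).1
          omega
        rw [h0]
        simp
    | succ ℓ h1 ih =>
        have hℓL : ℓ ≤ L := by omega
        have ihh := ih hℓL
        have hfil : F.filter (fun m => m < ℓ+1)
            = if ℓ ∈ F then insert ℓ (F.filter (fun m => m < ℓ)) else F.filter (fun m => m < ℓ) := by
          split_ifs with hℓF
          · ext m
            simp only [Finset.mem_filter, Finset.mem_insert]
            constructor
            · rintro ⟨hmF, hmℓ⟩
              by_cases hmm : m = ℓ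
              · exact Or.inl hmm
              · exact Or.inr ⟨hmF, by omega⟩
            · rintro (rfl | ⟨hmF, hmℓ⟩)
              · exact ⟨hℓF, by omega⟩
              · exact ⟨hmF, by omega⟩
          · ext m
            simp only [Finset.mem_filter]
            constructor
            · rintro ⟨hmF, hmℓ⟩
              refine ⟨hmF, ?_⟩
              rcases Nat.lt_succ_iff_lt_or_eq.mp hmℓ with h | rfl
              · exact h
              · exact absurd hmF hℓF
            · rintro ⟨hmF, hmℓ⟩
              exact ⟨hmF, by omega⟩
        rw [hfil]
        by_cases hℓF : ℓ ∈ F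
        · rw [if_pos hℓF]
          have hnm : ℓ ∉ F.filter (fun m => m < ℓ) := by
            intro hc
            have := (Finset.mem_filter.mp hc).2
            omega
          rw [Finset.card_insert_of_notMem hnm, Nat.even_add_one]
          have hflip := hFflip ℓ hℓF
          have hx : (sgn (ℓ+1) = sgn 1) ↔ ¬ (sgn ℓ = sgn 1) := by
            rcases hsgn_cases ℓ with hA | hA <;> rcases hsgn_cases (ℓ+1) with hB | hB <;>
              rcases hsgn_cases 1 with hD | hD <;>
              simp only [hA, hB, hD] at hflip ⊢ <;>
              first
                | exact absurd rfl hflip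
                | decide
          rw [hx]
          exact not_congr ihh
        · rw [if_neg hℓF, hsgn_step ℓ h1 (by omega) hℓF]
          exact ihh
  -- the polynomial
  set A : ℕ → ℤ := fun ℓ => ∏ m ∈ F, (2*(m:ℤ)+1 - 2*(ℓ:ℤ)) with hA
  have hkey : ∀ ℓ ∈ Icc 1 L, 0 < (sgn 1 * A ℓ) * sgn ℓ := by
    intro ℓ hℓ
    rw [mem_Icc] at hℓ
    rcases Nat.even_or_odd ((F.filter (fun m => m < ℓ)).card) with hev | hodd
    · have hpos' := (prod_sign F ℓ).1 hev
      have hsg := (hQ ℓ hℓ.1 hℓ.2).mp hev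
      rw [hsg]
      rcases hsgn_cases 1 with h | h <;> rw [h] <;> nlinarith [hpos']
    · have hodd' : ¬ Even ((F.filter (fun m => m < ℓ)).card) := by
        rw [Nat.not_even_iff_odd]; exact hodd
      have hneg := (prod_sign F ℓ).2 hodd'
      have hsg : sgn ℓ ≠ sgn 1 := fun hc => by
        rw [← hQ ℓ hℓ.1 hℓ.2] at hc; exact hodd' hc
      rcases hsgn_cases 1 with h1 | h1 <;> rcases hsgn_cases ℓ with h2 | h2 <;>
        rw [h1, h2] <;> rw [h1, h2] at hsg <;>
        first
          | (exfalso; exact hsg rfl)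
          | nlinarith [hneg]
  have htermpos : ∀ ℓ ∈ Icc 1 L, 0 ≤ (sgn 1 * A ℓ) * C ℓ := by
    intro ℓ hℓ
    have h1 := (hpos ℓ hℓ).1
    have h2 := hkey ℓ hℓ
    rcases hsgn_cases ℓ with h | h <;> rw [h] at h1 h2 <;> nlinarith
  have htermstrict : ∀ ℓ ∈ Icc 1 L, (sgn 1 * A ℓ) * C ℓ = 0 → C ℓ = 0 := by
    intro ℓ hℓ hz
    by_contra hC
    have h1 := (hpos ℓ hℓ).2 hC
    have h2 := hkey ℓ hℓ
    rcases hsgn_cases ℓ with h | h <;> rw [h] at h1 h2 <;> nlinarith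
  -- sum is zero via polynomial expansion
  have hsum0 : ∑ ℓ ∈ Icc 1 L, (sgn 1 * A ℓ) * C ℓ = 0 := by
    set P : Polynomial ℤ := Polynomial.C (sgn 1) * ∏ m ∈ F, (Polynomial.C (2*(m:ℤ)+1) - Polynomial.C 2 * Polynomial.X) with hP
    have heval : ∀ ℓ : ℕ, P.eval (ℓ:ℤ) = sgn 1 * A ℓ := by
      intro ℓ
      simp [hP, hA, Polynomial.eval_prod]
    have hdeg : P.natDegree < n + 1 := by
      have h1 : P.natDegree ≤ (∏ m ∈ F, (Polynomial.C (2*(m:ℤ)+1) - Polynomial.C 2 * Polynomial.X)).natDegree := by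
        rw [hP]; exact Polynomial.natDegree_C_mul_le _ _
      have h2 : (∏ m ∈ F, (Polynomial.C (2*(m:ℤ)+1) - Polynomial.C 2 * Polynomial.X)).natDegree
          ≤ ∑ m ∈ F, (Polynomial.C (2*(m:ℤ)+1) - Polynomial.C 2 * Polynomial.X).natDegree :=
        Polynomial.natDegree_prod_le _ _
      have h3 : ∀ m : ℕ, (Polynomial.C (2*(m:ℤ)+1) - Polynomial.C 2 * Polynomial.X).natDegree ≤ 1 := by
        intro m
        refine le_trans (Polynomial.natDegree_sub_le _ _) ?_
        simp only [Polynomial.natDegree_C, sup_le_iff]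
        constructor
        · omega
        · exact le_trans (Polynomial.natDegree_C_mul_le _ _) (le_of_eq Polynomial.natDegree_X)
      have h4 : ∑ m ∈ F, (Polynomial.C (2*(m:ℤ)+1) - Polynomial.C 2 * Polynomial.X).natDegree ≤ F.card := by
        have h5 := Finset.sum_le_card_nsmul F
          (fun m => (Polynomial.C (2*(m:ℤ)+1) - Polynomial.C 2 * Polynomial.X).natDegree) 1
          (fun m _ => h3 m)
        simpa using h5
      have h5 : F.card ≤ M.card := Finset.card_filter_le _ _
      omega
    calc ∑ ℓ ∈ Icc 1 L, (sgn 1 * A ℓ) * C ℓ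
        = ∑ ℓ ∈ Icc 1 L, (∑ t ∈ range (n+1), P.coeff t * (ℓ:ℤ)^t) * C ℓ := by
          refine Finset.sum_congr rfl (fun ℓ _ => ?_)
          rw [← heval ℓ, Polynomial.eval_eq_sum_range' hdeg]
      _ = ∑ ℓ ∈ Icc 1 L, ∑ t ∈ range (n+1), P.coeff t * ((ℓ:ℤ)^t * C ℓ) := by
          refine Finset.sum_congr rfl (fun ℓ _ => ?_)
          rw [Finset.sum_mul]
          exact Finset.sum_congr rfl (fun t _ => by ring)
      _ = ∑ t ∈ range (n+1), P.coeff t * ∑ ℓ ∈ Icc 1 L, (ℓ:ℤ)^t * C ℓ := by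
          rw [Finset.sum_comm]
          exact Finset.sum_congr rfl (fun t _ => by rw [Finset.mul_sum])
      _ = 0 := by
          apply Finset.sum_eq_zero
          intro t ht
          have htn := mem_range.mp ht
          rw [hmom t (by omega), mul_zero]
  intro ℓ hℓ
  have := (Finset.sum_eq_zero_iff_of_nonneg htermpos).mp hsum0 ℓ hℓ
  exact htermstrict ℓ hℓ this

set_option maxHeartbeats 2000000 in
lemma core (s L : ℕ) (hs : 1 ≤ s) (hL : 2*s+1 < L)
    (x x' : Fin L → Bool) (y : Fin (L-1) → Bool)
    (f g : Fin (L-1) → Fin L)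
    (d d' : ℕ) (hdL : d < L) (hd'L : d' < L) (hdd' : d ≤ d')
    (hfd : ∀ i : Fin (L-1), ((f i : ℕ)) = if (i:ℕ) < d then (i:ℕ) else (i:ℕ)+1)
    (hgd : ∀ i : Fin (L-1), ((g i : ℕ)) = if (i:ℕ) < d' then (i:ℕ) else (i:ℕ)+1)
    (hyx : hammingDist y (x ∘ f) ≤ s) (hyx' : hammingDist y (x' ∘ g) ≤ s)
    (hfj : ∀ j ∈ Finset.Icc 1 (2*s+1),
      dotA j x % ((2*s+1) * L^j) = dotA j x' % ((2*s+1) * L^j)) :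
    x = x' := by
  classical
  have hL4 : 4 ≤ L := by omega
  set XZ : ℕ → ℤ := fun k => if h : k < L then bi (x ⟨k, h⟩) else 0 with hXZ
  set X'Z : ℕ → ℤ := fun k => if h : k < L then bi (x' ⟨k, h⟩) else 0 with hX'Z
  have hXZval : ∀ i : Fin L, XZ (i:ℕ) = bi (x i) := by
    intro i
    simp only [hXZ, dif_pos i.isLt, Fin.eta]
  have hX'Zval : ∀ i : Fin L, X'Z (i:ℕ) = bi (x' i) := by
    intro i
    simp only [hX'Z, dif_pos i.isLt, Fin.eta]
  have hXZ01 : ∀ k, 0 ≤ XZ k ∧ XZ k ≤ 1 := by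
    intro k
    simp only [hXZ]
    split
    · exact ⟨bi_nonneg _, bi_le_one _⟩
    · exact ⟨le_refl 0, by norm_num⟩
  have hX'Z01 : ∀ k, 0 ≤ X'Z k ∧ X'Z k ≤ 1 := by
    intro k
    simp only [hX'Z]
    split
    · exact ⟨bi_nonneg _, bi_le_one _⟩
    · exact ⟨le_refl 0, by norm_num⟩
  set ee : Fin (L-1) → ℤ := fun i => bi (x (f i)) - bi (x' (g i)) with hee
  set C : ℕ → ℤ := fun ℓ => ∑ i : Fin L, (if ℓ ≤ (i:ℕ)+1 then bi (x i) - bi (x' i) else 0) with hC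
  -- deletion expansions
  set fv : ℕ → ℕ := fun k => if h : k < L-1 then ((f ⟨k, h⟩ : Fin L) : ℕ) else 0 with hfv
  set gv : ℕ → ℕ := fun k => if h : k < L-1 then ((g ⟨k, h⟩ : Fin L) : ℕ) else 0 with hgv
  have hfv' : ∀ k, k < L-1 → fv k = if k < d then k else k+1 := by
    intro k hk
    simp only [hfv, dif_pos hk]
    exact hfd ⟨k, hk⟩
  have hgv' : ∀ k, k < L-1 → gv k = if k < d' then k else k+1 := by
    intro k hk
    simp only [hgv, dif_pos hk]
    exact hgd ⟨k, hk⟩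
  have hNx : ∀ ℓ, 1 ≤ ℓ → ℓ ≤ L →
      (∑ i : Fin L, (if ℓ ≤ (i:ℕ)+1 then bi (x i) else 0))
        = (∑ i : Fin (L-1), (if ℓ ≤ (i:ℕ)+1 then bi (x (f i)) else 0))
          + (if ℓ ≤ d+1 then XZ d else XZ (ℓ-1)) := by
    intro ℓ hℓ1 hℓL
    have e1 : (∑ i : Fin L, (if ℓ ≤ (i:ℕ)+1 then bi (x i) else 0))
        = ∑ k ∈ range L, (if ℓ ≤ k+1 then XZ k else 0) := by
      rw [← Fin.sum_univ_eq_sum_range (fun k => if ℓ ≤ k+1 then XZ k else 0) L]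
      exact Finset.sum_congr rfl (fun i _ => by rw [hXZval i])
    have e3 : (∑ k ∈ range (L-1), (if ℓ ≤ k+1 then XZ (fv k) else 0))
        = ∑ i : Fin (L-1), (if ℓ ≤ (i:ℕ)+1 then bi (x (f i)) else 0) := by
      rw [← Fin.sum_univ_eq_sum_range (fun k => if ℓ ≤ k+1 then XZ (fv k) else 0) (L-1)]
      refine Finset.sum_congr rfl (fun i _ => ?_)
      have h4 : fv (i:ℕ) = ((f i : Fin L) : ℕ) := by
        simp only [hfv, dif_pos i.isLt, Fin.eta]
      rw [h4, hXZval (f i)]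
    rw [e1, del_expand L d hdL XZ fv hfv' ℓ hℓ1 hℓL, e3]
  have hNx' : ∀ ℓ, 1 ≤ ℓ → ℓ ≤ L →
      (∑ i : Fin L, (if ℓ ≤ (i:ℕ)+1 then bi (x' i) else 0))
        = (∑ i : Fin (L-1), (if ℓ ≤ (i:ℕ)+1 then bi (x' (g i)) else 0))
          + (if ℓ ≤ d'+1 then X'Z d' else X'Z (ℓ-1)) := by
    intro ℓ hℓ1 hℓL
    have e1 : (∑ i : Fin L, (if ℓ ≤ (i:ℕ)+1 then bi (x' i) else 0))
        = ∑ k ∈ range L, (if ℓ ≤ k+1 then X'Z k else 0) := by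
      rw [← Fin.sum_univ_eq_sum_range (fun k => if ℓ ≤ k+1 then X'Z k else 0) L]
      exact Finset.sum_congr rfl (fun i _ => by rw [hX'Zval i])
    have e3 : (∑ k ∈ range (L-1), (if ℓ ≤ k+1 then X'Z (gv k) else 0))
        = ∑ i : Fin (L-1), (if ℓ ≤ (i:ℕ)+1 then bi (x' (g i)) else 0) := by
      rw [← Fin.sum_univ_eq_sum_range (fun k => if ℓ ≤ k+1 then X'Z (gv k) else 0) (L-1)]
      refine Finset.sum_congr rfl (fun i _ => ?_)
      have h4 : gv (i:ℕ) = ((g i : Fin L) : ℕ) := by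
        simp only [hgv, dif_pos i.isLt, Fin.eta]
      rw [h4, hX'Zval (g i)]
    rw [e1, del_expand L d' hd'L X'Z gv hgv' ℓ hℓ1 hℓL, e3]
  -- the region identity
  have hReg : ∀ ℓ, 1 ≤ ℓ → ℓ ≤ L →
      C ℓ = ((if ℓ ≤ d+1 then XZ d else XZ (ℓ-1)) - (if ℓ ≤ d'+1 then X'Z d' else X'Z (ℓ-1)))
        + ∑ i : Fin (L-1), (if ℓ ≤ (i:ℕ)+1 then ee i else 0) := by
    intro ℓ hℓ1 hℓL
    have h0 : C ℓ = (∑ i : Fin L, (if ℓ ≤ (i:ℕ)+1 then bi (x i) else 0))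
        - (∑ i : Fin L, (if ℓ ≤ (i:ℕ)+1 then bi (x' i) else 0)) := by
      rw [hC, ← Finset.sum_sub_distrib]
      refine Finset.sum_congr rfl (fun i _ => ?_)
      split_ifs <;> ring
    have h1 : (∑ i : Fin (L-1), (if ℓ ≤ (i:ℕ)+1 then bi (x (f i)) else 0))
        - (∑ i : Fin (L-1), (if ℓ ≤ (i:ℕ)+1 then bi (x' (g i)) else 0))
        = ∑ i : Fin (L-1), (if ℓ ≤ (i:ℕ)+1 then ee i else 0) := by
      rw [← Finset.sum_sub_distrib]
      refine Finset.sum_congr rfl (fun i _ => ?_)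
      simp only [hee]
      split_ifs <;> ring
    rw [h0, hNx ℓ hℓ1 hℓL, hNx' ℓ hℓ1 hℓL, ← h1]
    ring
  -- casts
  have hdotcast : ∀ (z : Fin L → Bool) (j : ℕ),
      ((dotA j z : ℕ) : ℤ) = ∑ i : Fin L, (bi (z i)) * ((avec j ((i:ℕ)+1) : ℕ) : ℤ) := by
    intro z j
    rw [dotA, Nat.cast_sum]
    refine Finset.sum_congr rfl (fun i _ => ?_)
    rw [Nat.cast_mul]
    congr 1
    cases h : z i <;> simp [bi]
  have havec : ∀ j m : ℕ, ((avec j m : ℕ) : ℤ) = ∑ ℓ ∈ Icc 1 m, (ℓ:ℤ)^(j-1) := by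
    intro j m
    rw [avec, Nat.cast_sum]
    exact Finset.sum_congr rfl (fun ℓ _ => by push_cast; ring)
  have hmomID : ∀ j : ℕ, ((dotA j x : ℕ) : ℤ) - ((dotA j x' : ℕ) : ℤ)
      = ∑ ℓ ∈ Icc 1 L, (ℓ:ℤ)^(j-1) * C ℓ := by
    intro j
    rw [hdotcast x j, hdotcast x' j, ← Finset.sum_sub_distrib]
    have h1 : ∀ i : Fin L, bi (x i) * ((avec j ((i:ℕ)+1) : ℕ) : ℤ)
        - bi (x' i) * ((avec j ((i:ℕ)+1) : ℕ) : ℤ)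
        = (bi (x i) - bi (x' i)) * (∑ ℓ ∈ Icc 1 ((i:ℕ)+1), (ℓ:ℤ)^(j-1)) := by
      intro i
      rw [← havec j ((i:ℕ)+1)]
      ring
    rw [Finset.sum_congr rfl (fun i _ => h1 i)]
    exact swap_sum L L le_rfl (fun i => bi (x i) - bi (x' i)) (fun ℓ => (ℓ:ℤ)^(j-1))
  -- hamming distance bound on ee
  have hee_sum : (∑ i : Fin (L-1), |ee i|) ≤ 2*(s:ℤ) := by
    have habs : ∀ (a b c : Bool), |bi a - bi b| ≤ (if c ≠ a then (1:ℤ) else 0) + (if c ≠ b then 1 else 0) := by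
      decide
    have h1 : (∑ i : Fin (L-1), |ee i|)
        ≤ ∑ i : Fin (L-1), ((if y i ≠ x (f i) then (1:ℤ) else 0) + (if y i ≠ x' (g i) then 1 else 0)) := by
      refine Finset.sum_le_sum (fun i _ => ?_)
      simp only [hee]
      exact habs (x (f i)) (x' (g i)) (y i)
    rw [Finset.sum_add_distrib, Finset.sum_boole, Finset.sum_boole] at h1
    have h2 : (Finset.univ.filter (fun i : Fin (L-1) => y i ≠ x (f i))).card
        = hammingDist y (x ∘ f) := rfl
    have h3 : (Finset.univ.filter (fun i : Fin (L-1) => y i ≠ x' (g i))).card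
        = hammingDist y (x' ∘ g) := rfl
    rw [h2, h3] at h1
    have h4 : ((hammingDist y (x ∘ f) : ℕ) : ℤ) ≤ (s:ℤ) := by exact_mod_cast hyx
    have h5 : ((hammingDist y (x' ∘ g) : ℕ) : ℤ) ≤ (s:ℤ) := by exact_mod_cast hyx'
    linarith
  -- avec bounds
  have havecmono : ∀ j a b : ℕ, a ≤ b → avec j a ≤ avec j b := by
    intro j a b hab
    apply Finset.sum_le_sum_of_subset
    intro ℓ hℓ
    rw [mem_Icc] at hℓ ⊢
    omega
  have havL : ∀ j : ℕ, 1 ≤ j → avec j L ≤ L^j := by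
    intro j hj
    have h1 : avec j L ≤ (Icc 1 L).card • L^(j-1) := by
      apply Finset.sum_le_card_nsmul
      intro ℓ hℓ
      exact Nat.pow_le_pow_left (mem_Icc.mp hℓ).2 _
    rw [Nat.card_Icc] at h1
    have h2 : (L + 1 - 1) • L^(j-1) = L^(j-1) * L := by
      simp [smul_eq_mul, Nat.mul_comm]
    rw [h2, ← pow_succ] at h1
    have h3 : j - 1 + 1 = j := by omega
    rwa [h3] at h1
  have havL1 : ∀ j : ℕ, 1 ≤ j → avec j (L-1) ≤ L^j - 1 := by
    intro j hj
    have h1 : avec j (L-1) ≤ (Icc 1 (L-1)).card • (L-1)^(j-1) := by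
      apply Finset.sum_le_card_nsmul
      intro ℓ hℓ
      exact Nat.pow_le_pow_left (mem_Icc.mp hℓ).2 _
    rw [Nat.card_Icc] at h1
    have h2 : (L - 1 + 1 - 1) • (L-1)^(j-1) = (L-1)^(j-1) * (L-1) := by
      simp [smul_eq_mul, Nat.mul_comm]
    rw [h2, ← pow_succ] at h1
    have h3 : j - 1 + 1 = j := by omega
    rw [h3] at h1
    have h4 : (L-1)^j < L^j := Nat.pow_lt_pow_left (by omega) (by omega)
    omega
  -- Phase 1 : each moment difference vanishes
  have hD : ∀ j : ℕ, 1 ≤ j → j ≤ 2*s+1 → ((dotA j x : ℕ) : ℤ) - ((dotA j x' : ℕ) : ℤ) = 0 := by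
    intro j hj1 hj2
    set t := j - 1 with ht
    -- decompose the moment sum
    have hsplit : ∑ ℓ ∈ Icc 1 L, (ℓ:ℤ)^t * C ℓ
        = (∑ ℓ ∈ Icc 1 L, (ℓ:ℤ)^t * (if ℓ ≤ d+1 then XZ d else XZ (ℓ-1)))
          - (∑ ℓ ∈ Icc 1 L, (ℓ:ℤ)^t * (if ℓ ≤ d'+1 then X'Z d' else X'Z (ℓ-1)))
          + (∑ ℓ ∈ Icc 1 L, (ℓ:ℤ)^t * (∑ i : Fin (L-1), (if ℓ ≤ (i:ℕ)+1 then ee i else 0))) := by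
      rw [← Finset.sum_sub_distrib, ← Finset.sum_add_distrib]
      refine Finset.sum_congr rfl (fun ℓ hℓ => ?_)
      rw [mem_Icc] at hℓ
      rw [hReg ℓ hℓ.1 hℓ.2]
      ring
    have hPA : (0:ℤ) ≤ (∑ ℓ ∈ Icc 1 L, (ℓ:ℤ)^t * (if ℓ ≤ d+1 then XZ d else XZ (ℓ-1)))
        ∧ (∑ ℓ ∈ Icc 1 L, (ℓ:ℤ)^t * (if ℓ ≤ d+1 then XZ d else XZ (ℓ-1))) ≤ ((avec j L : ℕ) : ℤ) := by
      constructor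
      · apply Finset.sum_nonneg
        intro ℓ _
        apply mul_nonneg (by positivity)
        split_ifs
        · exact (hXZ01 d).1
        · exact (hXZ01 (ℓ-1)).1
      · rw [havec j L]
        refine Finset.sum_le_sum (fun ℓ _ => ?_)
        have hb : (if ℓ ≤ d+1 then XZ d else XZ (ℓ-1)) ≤ 1 := by
          split_ifs
          · exact (hXZ01 d).2
          · exact (hXZ01 (ℓ-1)).2
        have hnn : (0:ℤ) ≤ (ℓ:ℤ)^t := by positivity
        nlinarith
    have hPA' : (0:ℤ) ≤ (∑ ℓ ∈ Icc 1 L, (ℓ:ℤ)^t * (if ℓ ≤ d'+1 then X'Z d' else X'Z (ℓ-1)))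
        ∧ (∑ ℓ ∈ Icc 1 L, (ℓ:ℤ)^t * (if ℓ ≤ d'+1 then X'Z d' else X'Z (ℓ-1))) ≤ ((avec j L : ℕ) : ℤ) := by
      constructor
      · apply Finset.sum_nonneg
        intro ℓ _
        apply mul_nonneg (by positivity)
        split_ifs
        · exact (hX'Z01 d').1
        · exact (hX'Z01 (ℓ-1)).1
      · rw [havec j L]
        refine Finset.sum_le_sum (fun ℓ _ => ?_)
        have hb : (if ℓ ≤ d'+1 then X'Z d' else X'Z (ℓ-1)) ≤ 1 := by
          split_ifs
          · exact (hX'Z01 d').2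
          · exact (hX'Z01 (ℓ-1)).2
        have hnn : (0:ℤ) ≤ (ℓ:ℤ)^t := by positivity
        nlinarith
    have hPB : |∑ ℓ ∈ Icc 1 L, (ℓ:ℤ)^t * (∑ i : Fin (L-1), (if ℓ ≤ (i:ℕ)+1 then ee i else 0))|
        ≤ 2*(s:ℤ) * ((avec j (L-1) : ℕ) : ℤ) := by
      have hsw : ∑ ℓ ∈ Icc 1 L, (fun ℓ : ℕ => (ℓ:ℤ)^t) ℓ * (∑ i : Fin (L-1), (if ℓ ≤ (i:ℕ)+1 then ee i else 0))
          = ∑ i : Fin (L-1), ee i * (∑ ℓ ∈ Icc 1 ((i:ℕ)+1), (ℓ:ℤ)^t) :=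
        (swap_sum (L-1) L (by omega) ee (fun ℓ => (ℓ:ℤ)^t)).symm
      simp only at hsw
      rw [hsw]
      calc |∑ i : Fin (L-1), ee i * (∑ ℓ ∈ Icc 1 ((i:ℕ)+1), (ℓ:ℤ)^t)|
          ≤ ∑ i : Fin (L-1), |ee i * (∑ ℓ ∈ Icc 1 ((i:ℕ)+1), (ℓ:ℤ)^t)| :=
            Finset.abs_sum_le_sum_abs _ _
        _ ≤ ∑ i : Fin (L-1), |ee i| * ((avec j (L-1) : ℕ) : ℤ) := by
            refine Finset.sum_le_sum (fun i _ => ?_)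
            rw [abs_mul]
            have h1 : |∑ ℓ ∈ Icc 1 ((i:ℕ)+1), (ℓ:ℤ)^t| = ∑ ℓ ∈ Icc 1 ((i:ℕ)+1), (ℓ:ℤ)^t := by
              apply abs_of_nonneg
              apply Finset.sum_nonneg
              intro ℓ _
              positivity
            rw [h1, ← havec j ((i:ℕ)+1)]
            have h2 : (avec j ((i:ℕ)+1) : ℕ) ≤ avec j (L-1) :=
              havecmono j _ _ (by have := i.isLt; omega)
            have h3 : ((avec j ((i:ℕ)+1) : ℕ) : ℤ) ≤ ((avec j (L-1) : ℕ) : ℤ) := by exact_mod_cast h2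
            exact mul_le_mul_of_nonneg_left h3 (abs_nonneg _)
        _ = (∑ i : Fin (L-1), |ee i|) * ((avec j (L-1) : ℕ) : ℤ) := by
            rw [Finset.sum_mul]
        _ ≤ 2*(s:ℤ) * ((avec j (L-1) : ℕ) : ℤ) := by
            apply mul_le_mul_of_nonneg_right hee_sum
            positivity
    -- divisibility
    have hdvd : (((2*s+1) * L^j : ℕ) : ℤ) ∣ ((dotA j x' : ℕ) : ℤ) - ((dotA j x : ℕ) : ℤ) :=
      (Nat.modEq_iff_dvd).mp (hfj j (mem_Icc.mpr ⟨hj1, hj2⟩))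
    -- the numeric bound
    have hbound : |((dotA j x : ℕ) : ℤ) - ((dotA j x' : ℕ) : ℤ)| < (((2*s+1) * L^j : ℕ) : ℤ) := by
      have h1 := hmomID j
      rw [← ht] at h1
      rw [h1, hsplit]
      have hA1 := hPA.1
      have hA2 := hPA.2
      have hB1 := hPA'.1
      have hB2 := hPA'.2
      have hC1 := hPB
      have haL : ((avec j L : ℕ) : ℤ) ≤ ((L:ℤ))^j := by
        have := havL j hj1
        exact_mod_cast (le_trans this (le_refl _))
      have haL1 : ((avec j (L-1) : ℕ) : ℤ) ≤ ((L:ℤ))^j - 1 := by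
        have h5 := havL1 j hj1
        have h6 : (1:ℕ) ≤ L^j := Nat.one_le_pow _ _ (by omega)
        have : ((avec j (L-1) : ℕ) : ℤ) ≤ ((L^j - 1 : ℕ) : ℤ) := by exact_mod_cast h5
        rw [Nat.cast_sub h6] at this
        push_cast at this
        exact this
      have hcast : (((2*s+1) * L^j : ℕ) : ℤ) = (2*(s:ℤ)+1) * ((L:ℤ))^j := by push_cast; ring
      rw [hcast]
      set PA := ∑ ℓ ∈ Icc 1 L, (ℓ:ℤ)^t * (if ℓ ≤ d+1 then XZ d else XZ (ℓ-1)) with hPAdef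
      set PA' := ∑ ℓ ∈ Icc 1 L, (ℓ:ℤ)^t * (if ℓ ≤ d'+1 then X'Z d' else X'Z (ℓ-1)) with hPA'def
      set PE := ∑ ℓ ∈ Icc 1 L, (ℓ:ℤ)^t * (∑ i : Fin (L-1), (if ℓ ≤ (i:ℕ)+1 then ee i else 0)) with hPEdef
      set aL := ((avec j L : ℕ) : ℤ) with haLdef
      set aL1 := ((avec j (L-1) : ℕ) : ℤ) with haL1def
      rw [abs_le] at hC1
      rw [abs_lt]
      have hsge : (1:ℤ) ≤ (s:ℤ) := by exact_mod_cast hs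
      have hprod : 2*(s:ℤ) * aL1 ≤ 2*(s:ℤ) * ((L:ℤ)^j - 1) :=
        mul_le_mul_of_nonneg_left haL1 (by positivity)
      constructor
      · linarith [hC1.1, hC1.2]
      · linarith [hC1.1, hC1.2]
    -- conclude zero
    obtain ⟨k, hk⟩ := hdvd
    set N : ℤ := (((2*s+1) * L^j : ℕ) : ℤ) with hN
    have hNpos : 0 < N := by
      rw [hN]
      have : 0 < (2*s+1) * L^j := by positivity
      exact_mod_cast this
    have hDk : ((dotA j x : ℕ) : ℤ) - ((dotA j x' : ℕ) : ℤ) = -(N * k) := by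
      rw [← hk]; ring
    rw [hDk] at hbound ⊢
    have hk0 : k = 0 := by
      by_contra hk0
      have h1 : 1 ≤ |k| := Int.one_le_abs (by omega)
      rw [abs_neg, abs_mul, abs_of_pos hNpos] at hbound
      nlinarith
    rw [hk0]
    ring
  -- Phase 2 : structure of C
  set mfun : ℕ → ℕ := fun k => if d' ≤ k then k+2 else k+1 with hmfun
  set S : ℕ → ℤ := fun ℓ => ∑ i : Fin (L-1), (if ℓ ≤ mfun (i:ℕ) then ee i else 0) with hS
  set v : ℕ → ℤ := fun ℓ => S ℓ - bi (x' ⟨d', hd'L⟩) with hv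
  have hX'd' : X'Z d' = bi (x' ⟨d', hd'L⟩) := by
    simp only [hX'Z, dif_pos hd'L]
  -- evaluate ee at the special point
  have heeval : ∀ ℓ, d'+2 ≤ ℓ → ℓ ≤ L → ∀ (h2 : ℓ - 2 < L - 1),
      ee ⟨ℓ-2, h2⟩ = XZ (ℓ-1) - X'Z (ℓ-1) := by
    intro ℓ hℓd hℓL h2
    have hfe : f ⟨ℓ-2, h2⟩ = ⟨ℓ-1, by omega⟩ := by
      apply Fin.ext
      rw [hfd ⟨ℓ-2, h2⟩]
      simp only
      rw [if_neg (by omega)]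
      omega
    have hge : g ⟨ℓ-2, h2⟩ = ⟨ℓ-1, by omega⟩ := by
      apply Fin.ext
      rw [hgd ⟨ℓ-2, h2⟩]
      simp only
      rw [if_neg (by omega)]
      omega
    simp only [hee, hfe, hge]
    rw [show XZ (ℓ-1) = bi (x ⟨ℓ-1, by omega⟩) by simp only [hXZ, dif_pos (show ℓ-1 < L by omega)],
        show X'Z (ℓ-1) = bi (x' ⟨ℓ-1, by omega⟩) by simp only [hX'Z, dif_pos (show ℓ-1 < L by omega)]]
  -- C minus S
  have hCS : ∀ ℓ, 1 ≤ ℓ → ℓ ≤ L →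
      C ℓ - S ℓ = ((if ℓ ≤ d+1 then XZ d else XZ (ℓ-1)) - (if ℓ ≤ d'+1 then X'Z d' else X'Z (ℓ-1)))
        - (if d'+2 ≤ ℓ then XZ (ℓ-1) - X'Z (ℓ-1) else 0) := by
    intro ℓ hℓ1 hℓL
    have hdiff : (∑ i : Fin (L-1), (if ℓ ≤ (i:ℕ)+1 then ee i else 0)) - S ℓ
        = -(if d'+2 ≤ ℓ then XZ (ℓ-1) - X'Z (ℓ-1) else 0) := by
      have hterm : ∀ i : Fin (L-1),
          (if ℓ ≤ (i:ℕ)+1 then ee i else 0) - (if ℓ ≤ mfun (i:ℕ) then ee i else 0)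
          = -(if ((i:ℕ) = ℓ-2 ∧ d'+2 ≤ ℓ) then ee i else 0) := by
        intro i
        simp only [hmfun]
        by_cases hi : d' ≤ (i:ℕ)
        · rw [if_pos hi]
          by_cases hc1 : ℓ ≤ (i:ℕ)+1
          · rw [if_pos hc1, if_pos (by omega), if_neg (by omega)]
            ring
          · by_cases hc2 : ℓ = (i:ℕ)+2
            · rw [if_neg hc1, if_pos (by omega), if_pos (by omega)]
              ring
            · rw [if_neg hc1, if_neg (by omega), if_neg (by omega)]
              ring
        · have hcond : ¬((i:ℕ) = ℓ-2 ∧ d'+2 ≤ ℓ) := by omega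
          rw [if_neg hi, if_neg hcond]
          ring
      rw [hS, ← Finset.sum_sub_distrib]
      rw [Finset.sum_congr rfl (fun i _ => hterm i)]
      rw [Finset.sum_neg_distrib]
      congr 1
      by_cases hP : d'+2 ≤ ℓ
      · have h2 : ℓ - 2 < L - 1 := by omega
        calc (∑ i : Fin (L-1), if ((i:ℕ) = ℓ-2 ∧ d'+2 ≤ ℓ) then ee i else 0)
            = ∑ i : Fin (L-1), (if (i:ℕ) = ℓ-2 then ee i else 0) := by
              refine Finset.sum_congr rfl (fun i _ => ?_)
              simp only [hP, and_true]
          _ = ee ⟨ℓ-2, h2⟩ := point_sum (L-1) ee (ℓ-2) h2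
          _ = if d'+2 ≤ ℓ then XZ (ℓ-1) - X'Z (ℓ-1) else 0 := by
              rw [if_pos hP]
              exact heeval ℓ hP hℓL h2
      · rw [if_neg hP]
        apply Finset.sum_eq_zero
        intro i _
        rw [if_neg (by omega)]
    have hR := hReg ℓ hℓ1 hℓL
    have : C ℓ - S ℓ = ((if ℓ ≤ d+1 then XZ d else XZ (ℓ-1)) - (if ℓ ≤ d'+1 then X'Z d' else X'Z (ℓ-1)))
        + ((∑ i : Fin (L-1), (if ℓ ≤ (i:ℕ)+1 then ee i else 0)) - S ℓ) := by
      rw [hR]; ring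
    rw [this, hdiff]
    ring
  -- hCv for descartes
  have hCv : ∀ ℓ ∈ Icc 1 L, C ℓ = v ℓ ∨ C ℓ = v ℓ + 1 := by
    intro ℓ hℓ
    rw [mem_Icc] at hℓ
    have h1 := hCS ℓ hℓ.1 hℓ.2
    have hvv : C ℓ - v ℓ = (C ℓ - S ℓ) + bi (x' ⟨d', hd'L⟩) := by
      simp only [hv]; ring
    rcases bi_cases (x' ⟨d', hd'L⟩) with hb | hb
    all_goals {
      by_cases hc1 : ℓ ≤ d+1
      · rw [if_pos hc1, if_pos (by omega), if_neg (by omega)] at h1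
        have h2 := hXZ01 d
        have : C ℓ - v ℓ = XZ d := by rw [hvv, h1, hX'd']; ring
        omega
      · by_cases hc2 : ℓ ≤ d'+1
        · rw [if_neg hc1, if_pos hc2, if_neg (by omega)] at h1
          have h2 := hXZ01 (ℓ-1)
          have : C ℓ - v ℓ = XZ (ℓ-1) := by rw [hvv, h1, hX'd']; ring
          omega
        · rw [if_neg hc1, if_neg hc2, if_pos (by omega)] at h1
          have : C ℓ - v ℓ = bi (x' ⟨d', hd'L⟩) := by rw [hvv, h1]; ring
          omega
    }
  -- the breakpoint set
  set M : Finset ℕ := Finset.image (fun i : Fin (L-1) => mfun (i:ℕ))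
      ((Finset.univ.filter (fun i : Fin (L-1) => y i ≠ x (f i)))
        ∪ (Finset.univ.filter (fun i : Fin (L-1) => y i ≠ x' (g i)))) with hM
  have hMcard : M.card ≤ 2*s := by
    have h1 : M.card ≤ ((Finset.univ.filter (fun i : Fin (L-1) => y i ≠ x (f i)))
        ∪ (Finset.univ.filter (fun i : Fin (L-1) => y i ≠ x' (g i)))).card :=
      Finset.card_image_le
    have h2 := Finset.card_union_le
      (Finset.univ.filter (fun i : Fin (L-1) => y i ≠ x (f i)))
      (Finset.univ.filter (fun i : Fin (L-1) => y i ≠ x' (g i)))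
    have h3 : (Finset.univ.filter (fun i : Fin (L-1) => y i ≠ x (f i))).card
        = hammingDist y (x ∘ f) := rfl
    have h4 : (Finset.univ.filter (fun i : Fin (L-1) => y i ≠ x' (g i))).card
        = hammingDist y (x' ∘ g) := rfl
    omega
  have hvbrk : ∀ ℓ, 1 ≤ ℓ → ℓ < L → v ℓ ≠ v (ℓ+1) → ℓ ∈ M := by
    intro ℓ _ _ hne
    have hSne : S ℓ ≠ S (ℓ+1) := by
      intro hc
      apply hne
      simp only [hv, hc]
    have hex : ∃ i : Fin (L-1),
        (if ℓ ≤ mfun (i:ℕ) then ee i else 0) ≠ (if ℓ+1 ≤ mfun (i:ℕ) then ee i else 0) := by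
      by_contra hall
      push_neg at hall
      exact hSne (Finset.sum_congr rfl (fun i _ => hall i))
    obtain ⟨i, hi⟩ := hex
    have hm : mfun (i:ℕ) = ℓ ∧ ee i ≠ 0 := by
      by_cases hc1 : ℓ ≤ mfun (i:ℕ)
      · by_cases hc2 : ℓ+1 ≤ mfun (i:ℕ)
        · rw [if_pos hc1, if_pos hc2] at hi
          exact absurd rfl hi
        · refine ⟨by omega, ?_⟩
          intro hz
          rw [if_pos hc1, if_neg hc2, hz] at hi
          exact hi rfl
      · rw [if_neg hc1, if_neg (by omega)] at hi
        exact absurd rfl hi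
    have hiu : i ∈ (Finset.univ.filter (fun i : Fin (L-1) => y i ≠ x (f i)))
        ∪ (Finset.univ.filter (fun i : Fin (L-1) => y i ≠ x' (g i))) := by
      rcases ne_or_eq (y i) (x (f i)) with h1 | h1
      · exact Finset.mem_union_left _ (Finset.mem_filter.mpr ⟨Finset.mem_univ i, h1⟩)
      rcases ne_or_eq (y i) (x' (g i)) with h2 | h2
      · exact Finset.mem_union_right _ (Finset.mem_filter.mpr ⟨Finset.mem_univ i, h2⟩)
      exfalso
      apply hm.2
      simp only [hee, ← h1, ← h2, sub_self]
    rw [hM, Finset.mem_image]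
    exact ⟨i, hiu, hm.1⟩
  -- moments vanish
  have hmom' : ∀ t, t ≤ 2*s → ∑ ℓ ∈ Icc 1 L, (ℓ:ℤ)^t * C ℓ = 0 := by
    intro t ht
    have h1 := hmomID (t+1)
    have h2 := hD (t+1) (by omega) (by omega)
    rw [h2] at h1
    have h3 : (t+1) - 1 = t := by omega
    rw [h3] at h1
    exact h1.symm
  have hC0 := descartes (2*s) L C v M hMcard hmom' hCv hvbrk
  -- conclude x = x'
  have hCz : ∀ ℓ, L < ℓ → C ℓ = 0 := by
    intro ℓ hℓ
    apply Finset.sum_eq_zero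
    intro i _
    rw [if_neg (by have := i.isLt; omega)]
  funext i
  have h1 : C ((i:ℕ)+1) = 0 := hC0 _ (mem_Icc.mpr ⟨by omega, by have := i.isLt; omega⟩)
  have h2 : C ((i:ℕ)+2) = 0 := by
    by_cases hc : (i:ℕ)+2 ≤ L
    · exact hC0 _ (mem_Icc.mpr ⟨by omega, hc⟩)
    · exact hCz _ (by omega)
  have hw : C ((i:ℕ)+1) - C ((i:ℕ)+2) = bi (x i) - bi (x' i) := by
    have hterm : ∀ i' : Fin L,
        (if (i:ℕ)+1 ≤ (i':ℕ)+1 then bi (x i') - bi (x' i') else 0)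
          - (if (i:ℕ)+2 ≤ (i':ℕ)+1 then bi (x i') - bi (x' i') else 0)
        = (if (i':ℕ) = (i:ℕ) then bi (x i') - bi (x' i') else 0) := by
      intro i'
      by_cases hc1 : (i:ℕ)+1 ≤ (i':ℕ)+1
      · by_cases hc2 : (i:ℕ)+2 ≤ (i':ℕ)+1
        · rw [if_pos hc1, if_pos hc2, if_neg (by omega)]
          ring
        · rw [if_pos hc1, if_neg hc2, if_pos (by omega)]
          ring
      · rw [if_neg hc1, if_neg (by omega), if_neg (by omega)]
        ring
    calc C ((i:ℕ)+1) - C ((i:ℕ)+2)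
        = ∑ i' : Fin L, ((if (i:ℕ)+1 ≤ (i':ℕ)+1 then bi (x i') - bi (x' i') else 0)
            - (if (i:ℕ)+2 ≤ (i':ℕ)+1 then bi (x i') - bi (x' i') else 0)) := by
          rw [hC, ← Finset.sum_sub_distrib]
      _ = ∑ i' : Fin L, (if (i':ℕ) = (i:ℕ) then bi (x i') - bi (x' i') else 0) :=
          Finset.sum_congr rfl (fun i' _ => hterm i')
      _ = bi (x ⟨(i:ℕ), i.isLt⟩) - bi (x' ⟨(i:ℕ), i.isLt⟩) :=
          point_sum L (fun i' => bi (x i') - bi (x' i')) (i:ℕ) i.isLt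
      _ = bi (x i) - bi (x' i) := by rw [Fin.eta]
  rw [h1, h2] at hw
  exact bi_inj (by linarith)

theorem stmt12 (s L : ℕ) (hs : 1 ≤ s) (hL : 2 * s + 1 < L)
    (x x' : Fin L → Bool)
    (hInt : (ball s x ∩ ball s x').Nonempty)
    (hf : ∀ j ∈ Finset.Icc 1 (2 * s + 1),
      dotA j x % ((2 * s + 1) * L ^ j) = dotA j x' % ((2 * s + 1) * L ^ j)) :
    x = x' := by
  obtain ⟨y, hy1, hy2⟩ := hInt
  obtain ⟨f, hfm, hfdist⟩ := hy1
  obtain ⟨g, hgm, hgdist⟩ := hy2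
  have hL2 : 2 ≤ L := by omega
  obtain ⟨d, hdL, hfd⟩ := exists_del L hL2 f hfm
  obtain ⟨d', hd'L, hgd⟩ := exists_del L hL2 g hgm
  rcases le_total d d' with h | h
  · exact core s L hs hL x x' y f g d d' hdL hd'L h hfd hgd hfdist hgdist hf
  · exact (core s L hs hL x' x y g f d' d hd'L hdL h hgd hfd hgdist hfdist
      (fun j hj => (hf j hj).symm)).symm
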